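/- Let k be a countable field and let χ_μ : μ(k) → ℂ^× be a group homomorphism from the group of roots of unity of k to the nonzero complex numbers. Then there exists a group homomorphism χ : k^× → ℂ^× with χ restricted to μ(k) equal to χ_μ and with ker χ = ker χ_μ. -/

import Mathlib

open Complex

noncomputable instance : RootableBy ℂˣ ℕ where
  root x n := if h : n = 0 then 1 else
    Units.mk0 ((x : ℂ) ^ ((n : ℂ)⁻¹)) (fun h0 => x.ne_zero (by
      rw [← Complex.cpow_nat_inv_pow (x : ℂ) h, h0, zero_pow h]))
  root_zero x := by simp
  root_cancel {n} x hn := by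
    simp only [dif_neg hn]
    ext
    push_cast
    exact Complex.cpow_nat_inv_pow _ hn

noncomputable instance : RootableBy ℂˣ ℤ := Group.rootableByIntOfRootableByNat ℂˣ

noncomputable instance : DivisibleBy (Additive ℂˣ) ℤ where
  div a n := Additive.ofMul (RootableBy.root a.toMul n)
  div_zero a := congrArg Additive.ofMul (RootableBy.root_zero _)
  div_cancel a hn := by
    apply Additive.toMul.injective
    simpa using RootableBy.root_cancel (α := ℤ) a.toMul hn

lemma aux_extend {G : Type*} [CommGroup G] (H : Subgroup G) (f : ↥H →* ℂˣ) :
    ∃ F : G →* ℂˣ, ∀ x : ↥H, F ↑x = f x := by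
  obtain ⟨g', hg'⟩ := (Module.Baer.of_divisible (Additive ℂˣ)).extension_property_addMonoidHom
    (MonoidHom.toAdditive H.subtype)
    (fun a b h => Subtype.ext (congrArg Additive.toMul h))
    (MonoidHom.toAdditive f)
  refine ⟨MonoidHom.toAdditive.symm g', fun x => ?_⟩
  have := DFunLike.congr_fun hg' (Additive.ofMul x)
  simpa using congrArg Additive.toMul this
lemma aux_embed {G : Type*} [CommGroup G] [Countable G] (hG : IsMulTorsionFree G) :
    ∃ e : G → ℝ, (∀ a b, e (a * b) = e a + e b) ∧ ∀ a, e a = 0 → a = 1 := by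
  classical
  set A := Additive G
  have htf : IsAddTorsionFree A := inferInstanceAs (IsAddTorsionFree (Additive G))
  have : NoZeroSMulDivisors ℤ A :=
    IsAddTorsionFree.to_noZeroSMulDivisors_int
  -- functionals separating points
  have hf : ∀ q : A, ∃ g : A →+ ℚ, q ≠ 0 → g q = 1 := by
    intro q
    by_cases hq : q ≠ 0
    · have hinj : Function.Injective (zmultiplesHom A q) := by
        intro m n h
        simp only [zmultiplesHom_apply] at h
        have : (m - n) • q = 0 := by rw [sub_smul, h, sub_self]
        rcases smul_eq_zero.mp this with h' | h'
        · omega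
        · exact absurd h' hq
      obtain ⟨g, hg⟩ := (Module.Baer.of_divisible ℚ).extension_property_addMonoidHom
        (zmultiplesHom A q) hinj (Int.castAddHom ℚ)
      refine ⟨g, fun _ => ?_⟩
      have := DFunLike.congr_fun hg 1
      simpa using this
    · exact ⟨0, fun h => absurd hq (by simpa using h)⟩
  choose f hfspec using hf
  have : Countable A := inferInstanceAs (Countable G)
  obtain ⟨F, hFinj⟩ : ∃ F : A →+ (A → ℚ), Function.Injective F := by
    refine ⟨{ toFun := fun x q => f q x
              map_zero' := by funext q; simp
              map_add' := by intro a b; funext q; simp }, ?_⟩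
    intro a b h
    by_contra hne
    have hq : a - b ≠ 0 := sub_ne_zero.mpr (by exact hne)
    have h0 : (fun q => f q (a - b)) = (0 : A → ℚ) := by
      have : ∀ q, f q (a - b) = f q a - f q b := fun q => map_sub (f q) a b
      funext q
      simp [this q, congrFun h q, show f q a = f q b from congrFun h q]
    have h1 := congrFun h0 (a - b)
    rw [hfspec _ hq] at h1
    exact one_ne_zero h1
  obtain ⟨L, hLinj⟩ : ∃ L : ↥(Submodule.span ℚ (Set.range ⇑F)) →ₗ[ℚ] ℝ,
      Function.Injective L := by
    set W : Submodule ℚ (A → ℚ) := Submodule.span ℚ (Set.range ⇑F) with hW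
    have hrank : Module.rank ℚ ↥W ≤ Cardinal.aleph0 :=
      le_trans (rank_span_le _) (le_trans Cardinal.mk_range_le Cardinal.mk_le_aleph0)
    obtain ⟨s, hs_card, hs_li⟩ := le_rank_iff_exists_linearIndependent.mp
      (show (Cardinal.aleph0 : Cardinal) ≤ Module.rank ℚ ℝ by
        rw [Real.rank_rat_real]; exact Cardinal.aleph0_le_continuum)
    let b := Module.Basis.ofVectorSpace ℚ ↥W
    have hb : Cardinal.mk (Module.Basis.ofVectorSpaceIndex ℚ ↥W) = Module.rank ℚ ↥W := b.mk_eq_rank''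
    have hemb : Nonempty ((Module.Basis.ofVectorSpaceIndex ℚ ↥W) ↪ ↥s) := by
      rw [← Cardinal.lift_mk_le']
      rw [hs_card, Cardinal.lift_aleph0]
      refine le_trans (Cardinal.lift_le.mpr (hb.le.trans hrank)) ?_
      rw [Cardinal.lift_aleph0]
    obtain ⟨eq⟩ := hemb
    have hli : LinearIndependent ℚ (fun i => ((eq i : ℝ))) :=
      hs_li.comp eq eq.injective
    exact ⟨(Finsupp.linearCombination ℚ (fun i => ((eq i : ℝ)))) ∘ₗ
        (b.repr : ↥W ≃ₗ[ℚ] _).toLinearMap,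
      (show Function.Injective (Finsupp.linearCombination ℚ (fun i => ((eq i : ℝ)))) from hli).comp b.repr.injective⟩
  refine ⟨fun g => L ⟨F (Additive.ofMul g), Submodule.subset_span (Set.mem_range_self _)⟩, ?_, ?_⟩
  · intro x y
    have hv : (⟨F (Additive.ofMul (x * y)), Submodule.subset_span (Set.mem_range_self _)⟩ :
        ↥(Submodule.span ℚ (Set.range ⇑F))) =
        ⟨F (Additive.ofMul x), Submodule.subset_span (Set.mem_range_self _)⟩ +
        ⟨F (Additive.ofMul y), Submodule.subset_span (Set.mem_range_self _)⟩ := by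
      apply Subtype.ext
      show F (Additive.ofMul (x * y)) = F (Additive.ofMul x) + F (Additive.ofMul y)
      rw [ofMul_mul, map_add]
    show L _ = L _ + L _
    rw [hv, map_add]
  · intro x hx
    have h0 : L (0 : ↥(Submodule.span ℚ (Set.range ⇑F))) = 0 := map_zero L
    have := hLinj (hx.trans h0.symm)
    have hv : F (Additive.ofMul x) = 0 := congrArg Subtype.val this
    have := hFinj (hv.trans (map_zero F).symm)
    simpa [A] using this

/-- Let `k` be a countable field and `χμ : μ(k) → ℂˣ` a homomorphism on the group of
roots of unity of `k` (the torsion subgroup of `kˣ`). Then there is a homomorphism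
`χ : kˣ → ℂˣ` restricting to `χμ` on `μ(k)` and with `ker χ = ker χμ`. -/
theorem stmt0 (k : Type*) [Field k] [Countable k]
    (χμ : ↥(CommGroup.torsion kˣ) →* ℂˣ) :
    ∃ χ : kˣ →* ℂˣ,
      (∀ x : ↥(CommGroup.torsion kˣ), χ (x : kˣ) = χμ x) ∧
      χ.ker = χμ.ker.map (CommGroup.torsion kˣ).subtype := by
  classical
  obtain ⟨χ₀, hχ₀⟩ := aux_extend (CommGroup.torsion kˣ) χμ
  have hcu : Countable kˣ :=
    Function.Injective.countable
      (fun a b h => Units.ext h : Function.Injective (fun u : kˣ => (u : k)))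
  have hcq : Countable (kˣ ⧸ CommGroup.torsion kˣ) := Quotient.countable
  obtain ⟨e0, he0_mul, he0_zero⟩ :=
    aux_embed (G := kˣ ⧸ CommGroup.torsion kˣ) inferInstance
  set e : kˣ → ℝ := fun g => e0 (QuotientGroup.mk g) with he
  have he_mul : ∀ a b : kˣ, e (a * b) = e a + e b := by
    intro a b
    simp only [he, QuotientGroup.mk_mul, he0_mul]
  have he01 : e0 1 = 0 := by
    have := he0_mul 1 1
    rw [mul_one] at this
    linarith
  have he_T : ∀ g : kˣ, g ∈ CommGroup.torsion kˣ → e g = 0 := by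
    intro g hg
    have : (QuotientGroup.mk g : kˣ ⧸ CommGroup.torsion kˣ) = 1 := (QuotientGroup.eq_one_iff g).mpr hg
    rw [he]; simp only [this, he01]
  have he_zero : ∀ g : kˣ, e g = 0 → g ∈ CommGroup.torsion kˣ := by
    intro g hg
    exact (QuotientGroup.eq_one_iff g).mp (he0_zero _ hg)
  -- |χμ t| = 1
  have habs : ∀ t : ↥(CommGroup.torsion kˣ), ‖((χμ t : ℂˣ) : ℂ)‖ = 1 := by
    intro t
    obtain ⟨n, hn, hpow⟩ := ((CommGroup.mem_torsion _).mp t.2).exists_pow_eq_one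
    have h1 : (t ^ n : ↥(CommGroup.torsion kˣ)) = 1 := Subtype.ext (by push_cast; exact hpow)
    have h2 : (χμ t) ^ n = 1 := by rw [← map_pow, h1, map_one]
    have h3 : ((χμ t : ℂˣ) : ℂ) ^ n = 1 := by
      rw [← Units.val_pow_eq_pow_val, h2, Units.val_one]
    have h4 : (‖((χμ t : ℂˣ) : ℂ)‖) ^ n = 1 := by
      rw [← norm_pow, h3, norm_one]
    rcases (pow_eq_one_iff_of_ne_zero hn.ne').mp h4 with h | ⟨h, -⟩
    · exact h
    · exfalso
      have := norm_nonneg ((χμ t : ℂˣ) : ℂ)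
      rw [h] at this; linarith
  have habs0 : ∀ u : ℂˣ, (0:ℝ) < ‖(u : ℂ)‖ :=
    fun u => norm_pos_iff.mpr u.ne_zero
  have hne : ∀ g : kˣ, ((Real.exp (e g) / ‖((χ₀ g : ℂˣ) : ℂ)‖ : ℝ) : ℂ) ≠ 0 := by
    intro g
    rw [Complex.ofReal_ne_zero]
    exact ne_of_gt (div_pos (Real.exp_pos _) (habs0 _))
  set χ : kˣ →* ℂˣ :=
    { toFun := fun g => χ₀ g * Units.mk0 _ (hne g)
      map_one' := by
        ext
        have h1 : e (1 : kˣ) = 0 := he_T 1 (one_mem (CommGroup.torsion kˣ))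
        simp [h1]
      map_mul' := by
        intro x y
        ext
        have hx := habs0 (χ₀ x)
        have hy := habs0 (χ₀ y)
        simp only [Units.val_mul, Units.val_mk0, map_mul, norm_mul, he_mul, Real.exp_add,
          Complex.ofReal_div, Complex.ofReal_mul, Complex.ofReal_exp]
        field_simp } with hχdef
  have hres : ∀ t : ↥(CommGroup.torsion kˣ), χ (t : kˣ) = χμ t := by
    intro t
    ext
    have h1 : e (t : kˣ) = 0 := he_T _ t.2
    have h2 : χ₀ (t : kˣ) = χμ t := hχ₀ t
    simp [hχdef, h1, h2, habs t]
  refine ⟨χ, hres, ?_⟩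
  ext x
  simp only [MonoidHom.mem_ker, Subgroup.mem_map]
  constructor
  · intro hx
    have hxT : x ∈ CommGroup.torsion kˣ := by
      have hval : ((χ₀ x : ℂˣ) : ℂ) *
          ((Real.exp (e x) / ‖((χ₀ x : ℂˣ) : ℂ)‖ : ℝ) : ℂ) = 1 := by
        have := congrArg (fun u : ℂˣ => (u : ℂ)) hx
        simpa [hχdef] using this
      have habs1 := congrArg norm hval
      rw [norm_mul, norm_one] at habs1
      have hpos : (0:ℝ) < Real.exp (e x) / ‖((χ₀ x : ℂˣ) : ℂ)‖ :=
        div_pos (Real.exp_pos _) (habs0 _)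
      rw [Complex.norm_real, Real.norm_eq_abs, abs_of_pos hpos] at habs1
      have hC := habs0 (χ₀ x)
      field_simp at habs1
      exact he_zero x (by simpa using habs1)
    refine ⟨⟨x, hxT⟩, ?_, rfl⟩
    show χμ ⟨x, hxT⟩ = 1
    rw [← hres ⟨x, hxT⟩]
    exact hx
  · rintro ⟨t, ht, rfl⟩
    show χ ((CommGroup.torsion kˣ).subtype t) = 1
    rw [Subgroup.coe_subtype, hres t]
    exact ht
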